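/- Let Zprev, ε, W : Ω → ℝ be bounded random variables on a probability space (Ω, P) and let A : Ω → Bool, such that A is independent of the triple (Zprev, ε, W), ε is independent of W, and E[ε] = E[Zprev]. Define Z(ω) = Zprev(ω) if A(ω) is true and Z(ω) = ε(ω) otherwise, and set φ = P(A = true). Then Cov(Z, W) = φ·Cov(Zprev, W). -/

import Mathlib

open MeasureTheory ProbabilityTheory

private lemma bdd_integrable {Ω : Type*} [MeasurableSpace Ω] (P : Measure Ω)
    [IsProbabilityMeasure P] {f : Ω → ℝ} (hm : Measurable f)
    (hb : ∃ C, ∀ ω, |f ω| ≤ C) : Integrable f P := by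
  obtain ⟨C, hC⟩ := hb
  exact (integrable_const C).mono' hm.aestronglyMeasurable
    (Filter.Eventually.of_forall fun ω => by simpa using hC ω)

/-- **One-step covariance recursion for the DAR(1)/BDAR(1) models.**
Let `Zprev, ε, W : Ω → ℝ` be bounded random variables and `A : Ω → Bool`, with `A`
independent of the triple `(Zprev, ε, W)`, `ε` independent of `W`, and `E[ε] = E[Zprev]`.
Set `Z = if A then Zprev else ε` and `φ = P(A = true)`. Then
`Cov(Z, W) = φ·Cov(Zprev, W)`, where `Cov(X, Y) = E[X·Y] - E[X]·E[Y]`. -/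
theorem dar1_covariance_recursion
    {Ω : Type*} [MeasurableSpace Ω] (P : Measure Ω) [IsProbabilityMeasure P]
    (Zprev ε W : Ω → ℝ) (A : Ω → Bool)
    (hZprevm : Measurable Zprev) (hεm : Measurable ε) (hWm : Measurable W)
    (hAm : Measurable A)
    (hZprevb : ∃ C, ∀ ω, |Zprev ω| ≤ C)
    (hεb : ∃ C, ∀ ω, |ε ω| ≤ C)
    (hWb : ∃ C, ∀ ω, |W ω| ≤ C)
    (hAindep : IndepFun A (fun ω => (Zprev ω, ε ω, W ω)) P)
    (hεW : IndepFun ε W P)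
    (hmean : ∫ ω, ε ω ∂P = ∫ ω, Zprev ω ∂P)
    (Z : Ω → ℝ)
    (hZ : ∀ ω, Z ω = if A ω then Zprev ω else ε ω)
    (φ : ℝ) (hφ : φ = (P {ω | A ω = true}).toReal) :
    (∫ ω, Z ω * W ω ∂P) - (∫ ω, Z ω ∂P) * (∫ ω, W ω ∂P)
      = φ * ((∫ ω, Zprev ω * W ω ∂P) - (∫ ω, Zprev ω ∂P) * (∫ ω, W ω ∂P)) := by
  classical
  obtain ⟨C₁, hC₁⟩ := hZprevb
  obtain ⟨C₂, hC₂⟩ := hεb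
  obtain ⟨C₃, hC₃⟩ := hWb
  set I : Ω → ℝ := fun ω => if A ω then 1 else 0 with hIdef
  have hIm : Measurable I := Measurable.ite (hAm (measurableSet_singleton true))
    measurable_const measurable_const
  have hJm : Measurable (fun ω => 1 - I ω) := measurable_const.sub hIm
  -- independence facts via composition
  have hIZW : IndepFun I (fun ω => Zprev ω * W ω) P := by
    have := hAindep.comp (φ := fun b : Bool => if b then (1:ℝ) else 0)
      (ψ := fun p : ℝ × ℝ × ℝ => p.1 * p.2.2) (measurable_from_top)
      (measurable_fst.mul (measurable_snd.comp measurable_snd))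
    exact this
  have hIZ : IndepFun I Zprev P := by
    have := hAindep.comp (φ := fun b : Bool => if b then (1:ℝ) else 0)
      (ψ := fun p : ℝ × ℝ × ℝ => p.1) (measurable_from_top) measurable_fst
    exact this
  have hJεW : IndepFun (fun ω => 1 - I ω) (fun ω => ε ω * W ω) P := by
    have := hAindep.comp (φ := fun b : Bool => 1 - (if b then (1:ℝ) else 0))
      (ψ := fun p : ℝ × ℝ × ℝ => p.2.1 * p.2.2) (measurable_from_top)
      ((measurable_fst.comp measurable_snd).mul (measurable_snd.comp measurable_snd))
    exact this
  have hJε : IndepFun (fun ω => 1 - I ω) ε P := by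
    have := hAindep.comp (φ := fun b : Bool => 1 - (if b then (1:ℝ) else 0))
      (ψ := fun p : ℝ × ℝ × ℝ => p.2.1) (measurable_from_top)
      (measurable_fst.comp measurable_snd)
    exact this
  -- integral of I
  have hEI : ∫ ω, I ω ∂P = φ := by
    have hs : MeasurableSet {ω | A ω = true} := hAm (measurableSet_singleton true)
    have : I = Set.indicator {ω | A ω = true} (fun _ => (1:ℝ)) := by
      funext ω
      by_cases h : A ω = true <;> simp [hIdef, Set.indicator, h]
    rw [this, hφ]
    simp [integral_indicator hs, Measure.restrict_apply_univ, measureReal_def]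
  have hEJ : ∫ ω, (1 - I ω) ∂P = 1 - φ := by
    rw [integral_sub (integrable_const 1) (bdd_integrable P hIm ⟨1, fun ω => by
      by_cases h : A ω = true <;> simp [hIdef, h]⟩)]
    simp [hEI]
  -- integrability
  have hZpW : Integrable (fun ω => Zprev ω * W ω) P :=
    bdd_integrable P (hZprevm.mul hWm) ⟨C₁ * C₃, fun ω => by
      rw [abs_mul]; exact mul_le_mul (hC₁ ω) (hC₃ ω) (abs_nonneg _)
        ((abs_nonneg _).trans (hC₁ ω))⟩
  have hεWi : Integrable (fun ω => ε ω * W ω) P :=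
    bdd_integrable P (hεm.mul hWm) ⟨C₂ * C₃, fun ω => by
      rw [abs_mul]; exact mul_le_mul (hC₂ ω) (hC₃ ω) (abs_nonneg _)
        ((abs_nonneg _).trans (hC₂ ω))⟩
  have hZpi : Integrable Zprev P := bdd_integrable P hZprevm ⟨C₁, hC₁⟩
  have hεi : Integrable ε P := bdd_integrable P hεm ⟨C₂, hC₂⟩
  -- product integral identities
  have e1 : ∫ ω, I ω * (Zprev ω * W ω) ∂P
      = φ * ∫ ω, Zprev ω * W ω ∂P := by
    have h := hIZW.integral_mul_eq_mul_integral hIm.aestronglyMeasurable (hZprevm.mul hWm).aestronglyMeasurable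
    simpa [Pi.mul_apply, hEI] using h
  have e2 : ∫ ω, (1 - I ω) * (ε ω * W ω) ∂P
      = (1 - φ) * ((∫ ω, ε ω ∂P) * ∫ ω, W ω ∂P) := by
    have h : (∫ ω, (1 - I ω) * (ε ω * W ω) ∂P)
        = (∫ ω, (1 - I ω) ∂P) * ∫ ω, ε ω * W ω ∂P :=
      hJεW.integral_mul_eq_mul_integral hJm.aestronglyMeasurable (hεm.mul hWm).aestronglyMeasurable
    have h2 : (∫ ω, ε ω * W ω ∂P) = (∫ ω, ε ω ∂P) * ∫ ω, W ω ∂P :=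
      hεW.integral_mul_eq_mul_integral hεm.aestronglyMeasurable hWm.aestronglyMeasurable
    rw [h, h2, hEJ]
  have e3 : ∫ ω, I ω * Zprev ω ∂P = φ * ∫ ω, Zprev ω ∂P := by
    have h := hIZ.integral_mul_eq_mul_integral hIm.aestronglyMeasurable hZprevm.aestronglyMeasurable
    simpa [Pi.mul_apply, hEI] using h
  have e4 : ∫ ω, (1 - I ω) * ε ω ∂P = (1 - φ) * ∫ ω, ε ω ∂P := by
    have h := hJε.integral_mul_eq_mul_integral hJm.aestronglyMeasurable hεm.aestronglyMeasurable
    simpa [Pi.mul_apply, hEJ] using h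
  -- decompose Z
  have hZW : ∫ ω, Z ω * W ω ∂P
      = ∫ ω, (I ω * (Zprev ω * W ω) + (1 - I ω) * (ε ω * W ω)) ∂P := by
    refine integral_congr_ae (Filter.Eventually.of_forall fun ω => ?_)
    by_cases h : A ω = true <;> simp [hZ ω, hIdef, h]
  have hZi : ∫ ω, Z ω ∂P
      = ∫ ω, (I ω * Zprev ω + (1 - I ω) * ε ω) ∂P := by
    refine integral_congr_ae (Filter.Eventually.of_forall fun ω => ?_)
    by_cases h : A ω = true <;> simp [hZ ω, hIdef, h]
  rw [hZW, hZi,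
    integral_add (hZpW.bdd_mul hIm.aestronglyMeasurable (c := 1) (Filter.Eventually.of_forall fun ω => by
        by_cases h : A ω = true <;> simp [hIdef, h]))
      (hεWi.bdd_mul hJm.aestronglyMeasurable (c := 1) (Filter.Eventually.of_forall fun ω => by
        by_cases h : A ω = true <;> simp [hIdef, h])),
    integral_add (hZpi.bdd_mul hIm.aestronglyMeasurable (c := 1) (Filter.Eventually.of_forall fun ω => by
        by_cases h : A ω = true <;> simp [hIdef, h]))
      (hεi.bdd_mul hJm.aestronglyMeasurable (c := 1) (Filter.Eventually.of_forall fun ω => by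
        by_cases h : A ω = true <;> simp [hIdef, h])),
    e1, e2, e3, e4, hmean]
  ring
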